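/- The double sum ∑_{p^α ≤ n, α ≥ 1} (ln p^α)/p^α, over prime powers p^α ≤ n, equals ln n + O(1) as n → ∞. -/

import Mathlib

open Finset ArithmeticFunction

def ppow (n : ℕ) : Finset (ℕ × ℕ) :=
  (Finset.range (n+1) ×ˢ Finset.range (n+1)).filter
    (fun q => q.1.Prime ∧ 1 ≤ q.2 ∧ q.1 ^ q.2 ≤ n)

lemma mem_ppow_iff {n : ℕ} {q : ℕ × ℕ} :
    q ∈ ppow n ↔ q.1.Prime ∧ 1 ≤ q.2 ∧ q.1 ^ q.2 ≤ n := by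
  simp only [_root_.ppow, Finset.mem_filter, Finset.mem_product, Finset.mem_range]
  constructor
  · rintro ⟨-, h⟩; exact h
  · rintro ⟨hp, h1, hle⟩
    refine ⟨⟨?_, ?_⟩, hp, h1, hle⟩
    · exact lt_of_le_of_lt (le_trans (Nat.le_self_pow (Nat.one_le_iff_ne_zero.mp h1) q.1) hle)
        (Nat.lt_succ_self n)
    · exact lt_of_le_of_lt (le_trans (le_trans (Nat.lt_two_pow_self (n := q.2)).le
        (Nat.pow_le_pow_left hp.two_le q.2)) hle) (Nat.lt_succ_self n)

-- bijection lemma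
lemma sum_ppow_eq (n : ℕ) (g : ℕ → ℝ) :
    ∑ q ∈ ppow n, Real.log q.1 * g (q.1 ^ q.2) = ∑ m ∈ Ioc 0 n, Λ m * g m := by
  have h0 : ∑ m ∈ Ioc 0 n, Λ m * g m
      = ∑ m ∈ (Ioc 0 n).filter IsPrimePow, Λ m * g m := by
    rw [Finset.sum_filter_of_ne]
    intro m _ hne
    by_contra h
    exact hne (by rw [vonMangoldt_eq_zero_iff.2 h, zero_mul])
  rw [h0]
  refine Finset.sum_nbij' (fun q => q.1 ^ q.2)
    (fun m => (m.minFac, m.factorization m.minFac)) ?_ ?_ ?_ ?_ ?_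
  · intro q hq
    obtain ⟨hp, h1, hle⟩ := mem_ppow_iff.mp hq
    simp only [Finset.mem_filter, Finset.mem_Ioc]
    exact ⟨⟨pow_pos hp.pos _, hle⟩, ⟨q.1, q.2, hp.prime, h1, rfl⟩⟩
  · intro m hm
    simp only [Finset.mem_filter, Finset.mem_Ioc] at hm
    obtain ⟨⟨hm0, hmn⟩, hpp⟩ := hm
    obtain ⟨p, k, hp, hk, rfl⟩ := hpp
    rw [← Nat.prime_iff] at hp
    have : ((p ^ k).minFac, (p ^ k).factorization (p ^ k).minFac) = (p, k) := by
      rw [Prod.ext_iff]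
      refine ⟨hp.pow_minFac hk.ne', ?_⟩
      simp only [hp.pow_minFac hk.ne', hp.factorization_pow, Finsupp.single_eq_same]
    simp only [this]
    exact mem_ppow_iff.mpr ⟨hp, hk, hmn⟩
  · intro q hq
    obtain ⟨hp, h1, _⟩ := mem_ppow_iff.mp hq
    have := hp.pow_minFac (Nat.one_le_iff_ne_zero.mp h1)
    rw [Prod.ext_iff]
    constructor
    · simpa using this
    · simp only [hp.factorization_pow]
      rw [this, Finsupp.single_eq_same]
  · intro m hm
    simp only [Finset.mem_filter, Finset.mem_Ioc] at hm
    exact hm.2.minFac_pow_factorization_eq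
  · intro q hq
    obtain ⟨hp, h1, _⟩ := mem_ppow_iff.mp hq
    rw [vonMangoldt_apply_pow (Nat.one_le_iff_ne_zero.mp h1), vonMangoldt_apply_prime hp]

-- divisor swap
lemma sum_log_eq (n : ℕ) :
    ∑ m ∈ Ioc 0 n, Real.log m = ∑ d ∈ Ioc 0 n, Λ d * ((n / d : ℕ) : ℝ) := by
  have h1 : ∀ m ∈ Ioc 0 n, Real.log m = ∑ d ∈ (Ioc 0 n).filter (· ∣ m), Λ d := by
    intro m hm
    rw [Finset.mem_Ioc] at hm
    rw [← vonMangoldt_sum]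
    congr 1
    ext d
    simp only [Nat.mem_divisors, Finset.mem_filter, Finset.mem_Ioc]
    constructor
    · rintro ⟨hd, hm0⟩
      exact ⟨⟨Nat.pos_of_dvd_of_pos hd hm.1, le_trans (Nat.le_of_dvd hm.1 hd) hm.2⟩, hd⟩
    · rintro ⟨-, hd⟩
      exact ⟨hd, hm.1.ne'⟩
  rw [Finset.sum_congr rfl h1]
  simp_rw [Finset.sum_filter]
  rw [Finset.sum_comm]
  refine Finset.sum_congr rfl fun d _ => ?_
  rw [← Nat.Ioc_filter_dvd_card_eq_div, ← Finset.sum_filter, Finset.sum_const, nsmul_eq_mul,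
    mul_comm]

-- factorial bounds
lemma T_bounds (n : ℕ) (hn : 1 ≤ n) :
    (n : ℝ) * Real.log n - n ≤ ∑ m ∈ Ioc 0 n, Real.log m ∧
    ∑ m ∈ Ioc 0 n, Real.log m ≤ (n : ℝ) * Real.log n := by
  have hIoc : Ioc 0 n = Icc 1 n := (Finset.Icc_add_one_left_eq_Ioc 0 n).symm
  have hfac : ∑ m ∈ Ioc 0 n, Real.log m = Real.log (Nat.factorial n) := by
    rw [hIoc, show Icc 1 n = Ico 1 (n+1) by rw [Finset.Ico_add_one_right_eq_Icc],
      ← Finset.prod_Ico_id_eq_factorial, Nat.cast_prod, Real.log_prod]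
    intro i hi
    simp only [Finset.mem_Ico] at hi
    exact Nat.cast_ne_zero.mpr (by omega)
  have hn' : (0:ℝ) < n := by exact_mod_cast hn
  constructor
  · have h1 : (n : ℝ) ^ n / (Nat.factorial n : ℝ) ≤ Real.exp n := by
      calc (n : ℝ) ^ n / (Nat.factorial n : ℝ) ≤ ∑ i ∈ range (n + 1), (n : ℝ) ^ i / (Nat.factorial i : ℝ) := by
            refine Finset.single_le_sum (f := fun i => (n:ℝ)^i / (Nat.factorial i : ℝ))
              (fun i _ => by positivity) (Finset.self_mem_range_succ n)
        _ ≤ Real.exp n := Real.sum_le_exp_of_nonneg (Nat.cast_nonneg n) _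
    have h2 := Real.log_le_log (by positivity) h1
    rw [Real.log_div (by positivity) (by positivity), Real.log_pow, Real.log_exp] at h2
    rw [hfac]
    linarith
  · have hcard : ((Ioc 0 n).card : ℝ) = n := by rw [Nat.card_Ioc]; simp
    calc ∑ m ∈ Ioc 0 n, Real.log m ≤ (Ioc 0 n).card • Real.log n := by
          refine Finset.sum_le_card_nsmul _ _ _ fun m hm => ?_
          rw [Finset.mem_Ioc] at hm
          exact Real.log_le_log (by exact_mod_cast hm.1) (by exact_mod_cast hm.2)
      _ = (n : ℝ) * Real.log n := by rw [nsmul_eq_mul, hcard]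

lemma log_sq_le (n : ℕ) (hn : 1 ≤ n) : (Real.log n) ^ 2 ≤ 16 * Real.sqrt n := by
  set y := Real.sqrt (Real.sqrt n) with hy
  have hn' : (0:ℝ) < n := by exact_mod_cast hn
  have hy0 : 0 < y := Real.sqrt_pos.mpr (Real.sqrt_pos.mpr hn')
  have h1 : Real.log n = 4 * Real.log y := by
    rw [hy, Real.log_sqrt (Real.sqrt_nonneg _), Real.log_sqrt hn'.le]; ring
  have h2 : Real.log y ≤ y := (Real.log_le_sub_one_of_pos hy0).trans (by linarith)
  have h3 : 0 ≤ Real.log y := by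
    refine Real.log_nonneg ?_
    rw [hy]
    refine Real.one_le_sqrt.mpr (Real.one_le_sqrt.mpr (by exact_mod_cast hn))
  have h4 : y ^ 2 = Real.sqrt n := Real.sq_sqrt (Real.sqrt_nonneg _)
  calc (Real.log n) ^ 2 = 16 * (Real.log y) ^ 2 := by rw [h1]; ring
    _ ≤ 16 * y ^ 2 := by nlinarith
    _ = 16 * Real.sqrt n := by rw [h4]

lemma theta_le (n : ℕ) :
    ∑ p ∈ (range (n+1)).filter Nat.Prime, Real.log p ≤ 3 * n := by
  have h1 : ∑ p ∈ (range (n+1)).filter Nat.Prime, Real.log p = Real.log (primorial n) := by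
    rw [primorial, Nat.cast_prod, Real.log_prod]
    intro p hp
    simp only [Finset.mem_filter] at hp
    exact Nat.cast_ne_zero.mpr hp.2.pos.ne'
  rw [h1]
  calc Real.log (primorial n) ≤ Real.log ((4:ℕ) ^ n) := by
        refine Real.log_le_log (by exact_mod_cast primorial_pos n) ?_
        exact_mod_cast primorial_le_4_pow n
    _ = n * Real.log 4 := by push_cast; rw [Real.log_pow]
    _ ≤ n * 3 := by
        refine mul_le_mul_of_nonneg_left ?_ (Nat.cast_nonneg n)
        have := Real.log_le_sub_one_of_pos (by norm_num : (0:ℝ) < 4)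
        linarith
    _ = 3 * n := by ring

-- chebyshev
lemma psi_le (n : ℕ) (hn : 1 ≤ n) :
    ∑ d ∈ Ioc 0 n, Λ d ≤ 100 * n := by
  have hpsi : ∑ d ∈ Ioc 0 n, Λ d = ∑ q ∈ ppow n, Real.log q.1 := by
    have h := sum_ppow_eq n (fun _ => 1)
    simpa using h.symm
  rw [hpsi, ← Finset.sum_filter_add_sum_filter_not (ppow n) (fun q => q.2 = 1)]
  have hn' : (0:ℝ) < n := by exact_mod_cast hn
  have hslice1 : ∑ q ∈ (ppow n).filter (fun q => q.2 = 1), Real.log q.1 ≤ 3 * n := by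
    refine le_trans (le_of_eq ?_) (theta_le n)
    refine Finset.sum_nbij' (fun q => q.1) (fun p => (p, 1)) ?_ ?_ ?_ ?_ ?_
    · intro q hq
      simp only [Finset.mem_filter] at hq
      obtain ⟨hq, he⟩ := hq
      obtain ⟨hp, -, hle⟩ := mem_ppow_iff.mp hq
      rw [he, pow_one] at hle
      simp only [Finset.mem_filter, Finset.mem_range]
      exact ⟨Nat.lt_succ_of_le hle, hp⟩
    · intro p hp
      simp only [Finset.mem_filter, Finset.mem_range] at hp
      exact Finset.mem_filter.mpr ⟨mem_ppow_iff.mpr ⟨hp.2, le_refl 1, by simpa using Nat.lt_succ_iff.mp hp.1⟩, rfl⟩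
    · intro q hq
      simp only [Finset.mem_filter] at hq
      exact Prod.ext rfl hq.2.symm
    · intro p _; rfl
    · intro q _; rfl
  have hslice2 : ∑ q ∈ (ppow n).filter (fun q => ¬ q.2 = 1), Real.log q.1 ≤ 97 * n := by
    have hsub : (ppow n).filter (fun q => ¬ q.2 = 1) ⊆ Icc 2 (Nat.sqrt n) ×ˢ Icc 2 (Nat.log 2 n) := by
      intro q hq
      simp only [Finset.mem_filter] at hq
      obtain ⟨hq, hne⟩ := hq
      obtain ⟨hp, h1, hle⟩ := mem_ppow_iff.mp hq
      have h2 : 2 ≤ q.2 := by omega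
      simp only [Finset.mem_product, Finset.mem_Icc]
      refine ⟨⟨hp.two_le, ?_⟩, h2, ?_⟩
      · rw [Nat.le_sqrt]
        calc q.1 * q.1 = q.1 ^ 2 := (sq q.1).symm
          _ ≤ q.1 ^ q.2 := Nat.pow_le_pow_right hp.pos h2
          _ ≤ n := hle
      · refine Nat.le_log_of_pow_le one_lt_two ?_
        calc 2 ^ q.2 ≤ q.1 ^ q.2 := Nat.pow_le_pow_left hp.two_le q.2
          _ ≤ n := hle
    have hcard : ((ppow n).filter (fun q => ¬ q.2 = 1)).card ≤ Nat.sqrt n * Nat.log 2 n := by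
      refine le_trans (Finset.card_le_card hsub) ?_
      rw [Finset.card_product]
      exact Nat.mul_le_mul (by rw [Nat.card_Icc]; omega) (by rw [Nat.card_Icc]; omega)
    have hterm : ∀ q ∈ (ppow n).filter (fun q => ¬ q.2 = 1), Real.log q.1 ≤ Real.log n := by
      intro q hq
      simp only [Finset.mem_filter] at hq
      obtain ⟨hp, h1, hle⟩ := mem_ppow_iff.mp hq.1
      refine Real.log_le_log (by exact_mod_cast hp.pos) ?_
      exact_mod_cast le_trans (Nat.le_self_pow (by omega) q.1) hle
    have hsqrt : (Nat.sqrt n : ℝ) ≤ Real.sqrt n := by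
      exact Real.nat_sqrt_le_real_sqrt
    have hlog2 : (Nat.log 2 n : ℝ) ≤ 2 * Real.log n := by
      have hpow : 2 ^ (Nat.log 2 n) ≤ n := Nat.pow_log_le_self 2 (by omega)
      have h1 : Real.log ((2:ℝ) ^ (Nat.log 2 n)) ≤ Real.log n :=
        Real.log_le_log (by positivity) (by exact_mod_cast hpow)
      rw [Real.log_pow] at h1
      have h2 : (0.6931471803 : ℝ) < Real.log 2 := Real.log_two_gt_d9
      nlinarith [show (0:ℝ) ≤ (Nat.log 2 n : ℝ) from Nat.cast_nonneg _]
    have hlogn : 0 ≤ Real.log n := Real.log_nonneg (by exact_mod_cast hn)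
    have hS : Real.sqrt n ^ 2 = n := Real.sq_sqrt (Nat.cast_nonneg n)
    have hS0 : 0 ≤ Real.sqrt n := Real.sqrt_nonneg n
    calc ∑ q ∈ (ppow n).filter (fun q => ¬ q.2 = 1), Real.log q.1
        ≤ ((ppow n).filter (fun q => ¬ q.2 = 1)).card • Real.log n :=
          Finset.sum_le_card_nsmul _ _ _ hterm
      _ = (((ppow n).filter (fun q => ¬ q.2 = 1)).card : ℝ) * Real.log n := nsmul_eq_mul _ _
      _ ≤ ((Nat.sqrt n : ℝ) * (Nat.log 2 n : ℝ)) * Real.log n := by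
          refine mul_le_mul_of_nonneg_right ?_ hlogn
          exact_mod_cast hcard
      _ ≤ (Real.sqrt n * (2 * Real.log n)) * Real.log n := by
          refine mul_le_mul_of_nonneg_right ?_ hlogn
          exact mul_le_mul hsqrt hlog2 (Nat.cast_nonneg _) hS0
      _ = 2 * Real.sqrt n * (Real.log n) ^ 2 := by ring
      _ ≤ 2 * Real.sqrt n * (16 * Real.sqrt n) := by
          refine mul_le_mul_of_nonneg_left (log_sq_le n hn) (by positivity)
      _ = 32 * (Real.sqrt n ^ 2) := by ring
      _ = 32 * n := by rw [hS]
      _ ≤ 97 * n := by linarith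
  linarith

lemma log_le_two_sqrt {x : ℝ} (hx : 1 ≤ x) : Real.log x ≤ 2 * Real.sqrt x := by
  have h0 : (0:ℝ) < x := by linarith
  have h1 : Real.log x = 2 * Real.log (Real.sqrt x) := by
    rw [Real.log_sqrt h0.le]; ring
  have h2 : Real.log (Real.sqrt x) ≤ Real.sqrt x - 1 :=
    Real.log_le_sub_one_of_pos (Real.sqrt_pos.mpr h0)
  nlinarith [Real.sqrt_nonneg x]

lemma coeff_le (k : ℕ) : ((k:ℝ) + 1) ≤ 2 * (3/2:ℝ) ^ k := by
  induction k with
  | zero => norm_num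
  | succ m ih =>
      push_cast
      rw [pow_succ]
      push_cast at ih
      nlinarith [one_le_pow₀ (by norm_num : (1:ℝ) ≤ 3/2) (n := m)]

lemma telescope_step {x : ℝ} (hx : 2 ≤ x) :
    20 / (x * Real.sqrt x) ≤ 40 / Real.sqrt (x - 1) - 40 / Real.sqrt x := by
  set a := Real.sqrt (x - 1) with ha
  set b := Real.sqrt x with hb
  have hx0 : (0:ℝ) < x := by linarith
  have ha2 : a ^ 2 = x - 1 := Real.sq_sqrt (by linarith)
  have hb2 : b ^ 2 = x := Real.sq_sqrt hx0.le
  have ha0 : 0 < a := Real.sqrt_pos.mpr (by linarith)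
  have hb0 : 0 < b := Real.sqrt_pos.mpr hx0
  have hab : a ≤ b := Real.sqrt_le_sqrt (by linarith)
  have ha1 : 1 ≤ a := by nlinarith
  have h1 : 40 / a - 40 / b = 40 * (b - a) / (a * b) := by
    field_simp
  rw [h1, ← hb2]
  rw [div_le_div_iff₀ (by positivity) (by positivity)]
  have hdiff : (b - a) * (b + a) = 1 := by nlinarith
  nlinarith [sq_nonneg (b - a), mul_pos ha0 hb0, mul_pos (mul_pos ha0 hb0) hb0,
    mul_nonneg (mul_nonneg (sub_nonneg.mpr hab) hb0.le) hb0.le]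

lemma geom_bound (N : ℕ) : ∑ i ∈ range N, (3/4:ℝ) ^ i ≤ 4 := by
  rw [geom_sum_eq (by norm_num : (3/4:ℝ) ≠ 1)]
  have h : (0:ℝ) ≤ (3/4:ℝ) ^ N := by positivity
  have : ((3/4:ℝ) ^ N - 1) / ((3/4:ℝ) - 1) = 4 * (1 - (3/4:ℝ) ^ N) := by ring
  rw [this]
  linarith

-- tail
lemma tail_le (n : ℕ) (hn : 1 ≤ n) :
    ∑ q ∈ ppow n, ((q.2 : ℝ) - 1) * Real.log q.1 / (q.1 : ℝ) ^ q.2 ≤ 60 := by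
  set f : ℕ × ℕ → ℝ := fun q => ((q.2 : ℝ) - 1) * Real.log q.1 / (q.1 : ℝ) ^ q.2 with hf
  have hsub : ppow n ⊆ Icc 1 n ×ˢ Icc 1 n := by
    intro q hq
    obtain ⟨hp, h1, hle⟩ := mem_ppow_iff.mp hq
    simp only [Finset.mem_product, Finset.mem_Icc]
    refine ⟨⟨hp.one_lt.le, le_trans (Nat.le_self_pow (by omega) q.1) hle⟩,
      h1, le_trans (le_trans (Nat.lt_two_pow_self (n := q.2)).le (Nat.pow_le_pow_left hp.two_le q.2)) hle⟩
  have hnonneg : ∀ q ∈ Icc 1 n ×ˢ Icc 1 n, 0 ≤ f q := by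
    intro q hq
    simp only [Finset.mem_product, Finset.mem_Icc] at hq
    have h1 : (0:ℝ) ≤ (q.2:ℝ) - 1 := by
      have := hq.2.1; push_cast; linarith [show (1:ℝ) ≤ (q.2:ℝ) by exact_mod_cast this]
    have h2 : (0:ℝ) ≤ Real.log q.1 := Real.log_nonneg (by exact_mod_cast hq.1.1)
    positivity
  have step1 : ∑ q ∈ ppow n, f q ≤ ∑ q ∈ Icc 1 n ×ˢ Icc 1 n, f q :=
    Finset.sum_le_sum_of_subset_of_nonneg hsub (fun q hq _ => hnonneg q hq)
  have step2 : ∑ q ∈ Icc 1 n ×ˢ Icc 1 n, f q = ∑ p ∈ Icc 1 n, ∑ α ∈ Icc 1 n, f (p, α) := by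
    rw [Finset.sum_product]
  -- inner sum bound
  have inner : ∀ p ∈ Icc 1 n, ∑ α ∈ Icc 1 n, f (p, α) ≤ 10 * Real.log p / (p:ℝ)^2 := by
    intro p hp
    simp only [Finset.mem_Icc] at hp
    rcases eq_or_lt_of_le hp.1 with h1 | h2
    · -- p = 1
      have : ∀ α ∈ Icc 1 n, f (1, α) = 0 := by
        intro α _
        simp [hf]
      rw [← h1]
      rw [Finset.sum_congr rfl this]
      simp
    · -- p ≥ 2
      have hp2 : 2 ≤ p := h2
      have hP : (2:ℝ) ≤ (p:ℝ) := by exact_mod_cast hp2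
      have hL : (0:ℝ) ≤ Real.log p := Real.log_nonneg (by linarith)
      have hterm : ∀ α ∈ Icc 1 n, f (p, α) ≤
          (2 * Real.log p / (p:ℝ)^2) * (3/4:ℝ) ^ (α - 2) := by
        intro α hα
        simp only [Finset.mem_Icc] at hα
        rcases eq_or_lt_of_le hα.1 with e1 | e2
        · rw [← e1]
          simp only [hf]
          norm_num
          positivity
        · have hα2 : 2 ≤ α := e2
          have hc : ((α:ℝ) - 1) ≤ 2 * (3/2:ℝ) ^ (α - 2) := by
            have := coeff_le (α - 2)
            have he : ((α - 2 : ℕ) : ℝ) + 1 = (α:ℝ) - 1 := by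
              have : α - 2 + 3 = α + 1 := by omega
              push_cast [Nat.cast_sub hα2]
              ring
            rw [he] at this
            exact this
          have hpow : (p:ℝ) ^ α = (p:ℝ)^2 * (p:ℝ)^(α - 2) := by
            rw [← pow_add]
            congr 1
            omega
          have hfrac : ((3/2:ℝ) / (p:ℝ)) ^ (α - 2) ≤ (3/4:ℝ) ^ (α - 2) := by
            refine pow_le_pow_left₀ (by positivity) ?_ _
            rw [div_le_iff₀ (by linarith)]
            linarith
          have hPpos : (0:ℝ) < (p:ℝ) := by linarith
          calc f (p, α) = ((α:ℝ) - 1) * Real.log p / ((p:ℝ)^2 * (p:ℝ)^(α-2)) := by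
                rw [hf]; simp only; rw [hpow]
            _ ≤ (2 * (3/2:ℝ)^(α-2)) * Real.log p / ((p:ℝ)^2 * (p:ℝ)^(α-2)) := by
                gcongr
            _ = (2 * Real.log p / (p:ℝ)^2) * ((3/2:ℝ)/(p:ℝ))^(α-2) := by
                ring
            _ ≤ (2 * Real.log p / (p:ℝ)^2) * (3/4:ℝ)^(α-2) := by
                refine mul_le_mul_of_nonneg_left hfrac (by positivity)
      have hgeo : ∑ α ∈ Icc 1 n, (3/4:ℝ) ^ (α - 2) ≤ 5 := by
        rw [show Icc 1 n = Ico 1 (n+1) by rw [Finset.Ico_add_one_right_eq_Icc]]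
        rw [Finset.sum_eq_sum_Ico_succ_bot (by omega)]
        have h0 : ((3:ℝ)/4) ^ (1 - 2) = 1 := by norm_num
        rw [h0]
        have : ∑ α ∈ Ico 2 (n+1), (3/4:ℝ) ^ (α - 2)
            = ∑ i ∈ range (n + 1 - 2), (3/4:ℝ) ^ i := by
          rw [Finset.sum_Ico_eq_sum_range]
          refine Finset.sum_congr rfl fun i _ => by congr 1; omega
        rw [this]
        linarith [geom_bound (n + 1 - 2)]
      calc ∑ α ∈ Icc 1 n, f (p, α)
          ≤ ∑ α ∈ Icc 1 n, (2 * Real.log p / (p:ℝ)^2) * (3/4:ℝ) ^ (α - 2) :=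
            Finset.sum_le_sum hterm
        _ = (2 * Real.log p / (p:ℝ)^2) * ∑ α ∈ Icc 1 n, (3/4:ℝ) ^ (α - 2) := by
            rw [Finset.mul_sum]
        _ ≤ (2 * Real.log p / (p:ℝ)^2) * 5 := by
            refine mul_le_mul_of_nonneg_left hgeo (by positivity)
        _ = 10 * Real.log p / (p:ℝ)^2 := by ring
  -- outer sum bound
  have outer : ∑ p ∈ Icc 1 n, 10 * Real.log p / (p:ℝ)^2 ≤ 60 := by
    have hterm2 : ∀ p ∈ Icc 1 n, 10 * Real.log p / (p:ℝ)^2 ≤ 20 / ((p:ℝ) * Real.sqrt p) := by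
      intro p hp
      simp only [Finset.mem_Icc] at hp
      have hp1 : (1:ℝ) ≤ (p:ℝ) := by exact_mod_cast hp.1
      have hlog : Real.log p ≤ 2 * Real.sqrt p := log_le_two_sqrt hp1
      have hs : Real.sqrt p * Real.sqrt p = (p:ℝ) := Real.mul_self_sqrt (by linarith)
      have hs0 : 0 < Real.sqrt p := Real.sqrt_pos.mpr (by linarith)
      rw [div_le_div_iff₀ (by positivity) (by positivity)]
      calc 10 * Real.log p * ((p:ℝ) * Real.sqrt p)
          ≤ 10 * (2 * Real.sqrt p) * ((p:ℝ) * Real.sqrt p) := by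
            refine mul_le_mul_of_nonneg_right (by nlinarith) (by positivity)
        _ = 20 * ((p:ℝ) * ((p:ℝ))) := by nlinarith [hs]
        _ = 20 * (p:ℝ)^2 := by ring
    refine le_trans (Finset.sum_le_sum hterm2) ?_
    rw [show Icc 1 n = Ico 1 (n+1) by rw [Finset.Ico_add_one_right_eq_Icc]]
    rw [Finset.sum_eq_sum_Ico_succ_bot (by omega)]
    have hfirst : 20 / ((1:ℕ):ℝ) / Real.sqrt ((1:ℕ):ℝ) = 20 := by norm_num
    have h1 : (20:ℝ) / (((1:ℕ):ℝ) * Real.sqrt ((1:ℕ):ℝ)) = 20 := by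
      norm_num
    rw [h1]
    have htail : ∑ p ∈ Ico 2 (n+1), 20 / ((p:ℝ) * Real.sqrt p) ≤ 40 := by
      have hstep : ∀ i ∈ range (n + 1 - 2),
          20 / (((2 + i : ℕ):ℝ) * Real.sqrt ((2 + i : ℕ):ℝ))
            ≤ 40 / Real.sqrt ((i:ℝ) + 1) - 40 / Real.sqrt ((i:ℝ) + 2) := by
        intro i _
        have hx : (2:ℝ) ≤ ((2 + i : ℕ):ℝ) := by push_cast; linarith [show (0:ℝ) ≤ (i:ℝ) from Nat.cast_nonneg i]
        have h := telescope_step hx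
        have he1 : ((2 + i : ℕ):ℝ) - 1 = (i:ℝ) + 1 := by push_cast; ring
        have he2 : ((2 + i : ℕ):ℝ) = (i:ℝ) + 2 := by push_cast; ring
        rw [he1, he2] at h
        rw [he2]
        exact h
      rw [Finset.sum_Ico_eq_sum_range]
      calc ∑ i ∈ range (n + 1 - 2), 20 / (((2 + i : ℕ):ℝ) * Real.sqrt ((2 + i : ℕ):ℝ))
          ≤ ∑ i ∈ range (n + 1 - 2), (40 / Real.sqrt ((i:ℝ) + 1) - 40 / Real.sqrt ((i:ℝ) + 2)) :=
            Finset.sum_le_sum hstep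
        _ = 40 / Real.sqrt (((0:ℕ):ℝ) + 1) - 40 / Real.sqrt (((n + 1 - 2 : ℕ):ℝ) + 1) := by
            have h := Finset.sum_range_sub' (fun i : ℕ => 40 / Real.sqrt ((i:ℝ) + 1)) (n + 1 - 2)
            rw [← h]
            refine Finset.sum_congr rfl fun i _ => ?_
            push_cast
            ring_nf
        _ ≤ 40 := by
            have h0 : Real.sqrt (((0:ℕ):ℝ) + 1) = 1 := by norm_num
            have hpos : 0 ≤ 40 / Real.sqrt (((n + 1 - 2 : ℕ):ℝ) + 1) := by positivity
            rw [h0, div_one]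
            linarith
    linarith
  calc ∑ q ∈ ppow n, f q ≤ ∑ q ∈ Icc 1 n ×ˢ Icc 1 n, f q := step1
    _ = ∑ p ∈ Icc 1 n, ∑ α ∈ Icc 1 n, f (p, α) := step2
    _ ≤ ∑ p ∈ Icc 1 n, 10 * Real.log p / (p:ℝ)^2 := Finset.sum_le_sum inner
    _ ≤ 60 := outer

theorem sum_log_primepow :
    ∃ C : ℝ, ∀ n : ℕ, 2 ≤ n →
      |(∑ q ∈ ppow n, (q.2 : ℝ) * Real.log q.1 / (q.1 : ℝ) ^ q.2) - Real.log n| ≤ C := by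
  refine ⟨300, fun n hn => ?_⟩
  have hn1 : 1 ≤ n := by omega
  have hn' : (0:ℝ) < n := by exact_mod_cast hn1
  set S := ∑ q ∈ ppow n, (q.2 : ℝ) * Real.log q.1 / (q.1 : ℝ) ^ q.2 with hS
  set A := ∑ m ∈ Ioc 0 n, Λ m * (1 / (m:ℝ)) with hA
  -- relate A to a ppow sum
  have hA' : A = ∑ q ∈ ppow n, Real.log q.1 / (q.1 : ℝ) ^ q.2 := by
    rw [hA, ← sum_ppow_eq n (fun m => 1 / (m:ℝ))]
    refine Finset.sum_congr rfl fun q _ => ?_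
    push_cast
    ring
  -- S - A is the tail
  have htail : S - A ≤ 60 := by
    rw [hA', hS, ← Finset.sum_sub_distrib]
    refine le_trans (le_of_eq (Finset.sum_congr rfl fun q _ => ?_)) (tail_le n hn1)
    ring
  have htail0 : 0 ≤ S - A := by
    rw [hA', hS, ← Finset.sum_sub_distrib]
    refine Finset.sum_nonneg fun q hq => ?_
    obtain ⟨hp, h1, -⟩ := mem_ppow_iff.mp hq
    have hq1 : (1:ℝ) ≤ (q.2:ℝ) := by exact_mod_cast h1
    have hL : (0:ℝ) ≤ Real.log q.1 := Real.log_nonneg (by exact_mod_cast hp.one_lt.le)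
    have hP : (0:ℝ) < (q.1:ℝ) ^ q.2 := by
      have : (0:ℝ) < (q.1:ℝ) := by exact_mod_cast hp.pos
      positivity
    have : (q.2 : ℝ) * Real.log q.1 / (q.1 : ℝ) ^ q.2 - Real.log q.1 / (q.1 : ℝ) ^ q.2
        = ((q.2:ℝ) - 1) * Real.log q.1 / (q.1 : ℝ) ^ q.2 := by ring
    rw [this]
    exact div_nonneg (mul_nonneg (by linarith) hL) hP.le
  -- bounds on A
  set T := ∑ m ∈ Ioc 0 n, Real.log m with hT
  have hTB := T_bounds n hn1
  have hpsi := psi_le n hn1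
  have hup : T ≤ n * A := by
    rw [hT, sum_log_eq n, hA, Finset.mul_sum]
    refine Finset.sum_le_sum fun d hd => ?_
    rw [Finset.mem_Ioc] at hd
    have hd' : (0:ℝ) < (d:ℝ) := by exact_mod_cast hd.1
    have h1 : ((n / d : ℕ) : ℝ) ≤ (n:ℝ) / d := Nat.cast_div_le
    calc Λ d * ((n / d : ℕ) : ℝ) ≤ Λ d * ((n:ℝ) / d) :=
          mul_le_mul_of_nonneg_left h1 vonMangoldt_nonneg
      _ = (n:ℝ) * (Λ d * (1 / (d:ℝ))) := by field_simp
  have hlow : n * A - 100 * n ≤ T := by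
    have key : ∀ d ∈ Ioc 0 n, (n:ℝ) * (Λ d * (1 / (d:ℝ))) - Λ d ≤ Λ d * ((n / d : ℕ) : ℝ) := by
      intro d hd
      rw [Finset.mem_Ioc] at hd
      have hd' : (0:ℝ) < (d:ℝ) := by exact_mod_cast hd.1
      have h2 : (n:ℝ) / d - 1 ≤ ((n / d : ℕ) : ℝ) := by
        have hmod : n % d < d := Nat.mod_lt n hd.1
        have heq : n = d * (n / d) + n % d := (Nat.div_add_mod n d).symm
        have hcast : (n:ℝ) = (d:ℝ) * ((n / d : ℕ) : ℝ) + ((n % d : ℕ) : ℝ) := by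
          exact_mod_cast heq
        have hmod' : ((n % d : ℕ) : ℝ) < (d:ℝ) := by exact_mod_cast hmod
        rw [div_sub_one hd'.ne', div_le_iff₀ hd']
        nlinarith
      calc (n:ℝ) * (Λ d * (1 / (d:ℝ))) - Λ d = Λ d * ((n:ℝ)/d - 1) := by field_simp
        _ ≤ Λ d * ((n / d : ℕ) : ℝ) := mul_le_mul_of_nonneg_left h2 vonMangoldt_nonneg
    have := Finset.sum_le_sum key
    rw [← sum_log_eq n, ← hT] at this
    rw [hA, Finset.mul_sum]
    have hsub : ∑ d ∈ Ioc 0 n, ((n:ℝ) * (Λ d * (1 / (d:ℝ))) - Λ d)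
        = (∑ d ∈ Ioc 0 n, (n:ℝ) * (Λ d * (1 / (d:ℝ)))) - ∑ d ∈ Ioc 0 n, Λ d := by
      rw [Finset.sum_sub_distrib]
    rw [hsub] at this
    linarith
  -- combine
  obtain ⟨hT1, hT2⟩ := hTB
  have hAlow : Real.log n - 1 ≤ A := by
    have h := le_trans hT1 hup
    rw [show (n:ℝ) * Real.log n - n = (n:ℝ) * (Real.log n - 1) by ring] at h
    exact (mul_le_mul_iff_right₀ hn').mp h
  have hAup : A ≤ Real.log n + 100 := by
    have h : (n:ℝ) * A ≤ (n:ℝ) * (Real.log n + 100) := by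
      calc (n:ℝ) * A ≤ T + 100 * n := by linarith
        _ ≤ (n:ℝ) * Real.log n + 100 * n := by linarith
        _ = (n:ℝ) * (Real.log n + 100) := by ring
    exact (mul_le_mul_iff_right₀ hn').mp h
  rw [abs_le]
  constructor <;> linarith
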